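/- For every integer r ≥ 0 and every polynomial f ∈ F[z_1,…,z_N] symmetric in all N variables: [ Σ_{i=1}^{N−1} D_i^r , D_N ] f = β ( (N−1) D_N^r − Σ_{i=1}^{N−1} D_i^r ) f. -/

import Mathlib

open MvPolynomial Finset

section CSDefs

variable {F : Type*} [Field F] [CharZero F]

/-- Exact division in a polynomial ring: `divExact d f = f / d` when `d ∣ f`, junk otherwise. -/
noncomputable def divExact {σ : Type*} (d f : MvPolynomial σ F) : MvPolynomial σ F := by
  classical exact if h : ∃ c, f = d * c then h.choose else 0

/-- The exchange operator `K_{ij}` permuting the variables `z_i` and `z_j`. -/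
noncomputable def Kswap {N : ℕ} (i j : Fin N) (f : MvPolynomial (Fin N) F) :
    MvPolynomial (Fin N) F :=
  rename (Equiv.swap i j) f

/-- The Dunkl operator `∇_i = ∂_i + β ∑_{j ≠ i} (z_i - z_j)⁻¹ (1 - K_{ij})`. -/
noncomputable def nabla {N : ℕ} (β : F) (i : Fin N) (f : MvPolynomial (Fin N) F) :
    MvPolynomial (Fin N) F :=
  pderiv i f + β • ∑ j ∈ Finset.univ.erase i, divExact (X i - X j) (f - Kswap i j f)

/-- `D_i = z_i ∇_i`. -/
noncomputable def Dop {N : ℕ} (β : F) (i : Fin N) (f : MvPolynomial (Fin N) F) :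
    MvPolynomial (Fin N) F :=
  X i * nabla β i f

/-- `(D_{j₁} + kβ)(D_{j₂} + (k+1)β) ⋯` applied along a list of indices. -/
noncomputable def Dlist {N : ℕ} (β : F) :
    ℕ → List (Fin N) → MvPolynomial (Fin N) F → MvPolynomial (Fin N) F
  | _, [], f => f
  | k, j :: rest, f => Dop β j (Dlist β (k + 1) rest f) + ((k : F) * β) • Dlist β (k + 1) rest f

/-- `D_{k,J} = (D_{j₁} + kβ)(D_{j₂} + (k+1)β) ⋯ (D_{j_ℓ} + (k+ℓ-1)β)` for
`J = {j₁ < j₂ < … < j_ℓ}`. -/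
noncomputable def DJ {N : ℕ} (β : F) (k : ℕ) (J : Finset (Fin N))
    (f : MvPolynomial (Fin N) F) : MvPolynomial (Fin N) F :=
  Dlist β k (J.sort (· ≤ ·)) f

/-- `z_J = ∏_{i ∈ J} z_i`. -/
noncomputable def zJ {N : ℕ} (J : Finset (Fin N)) : MvPolynomial (Fin N) F := ∏ i ∈ J, X i

/-- The creation operator `B⁺_{i,J} = ∑_{J' ⊆ J, |J'| = i} z_{J'} D_{1,J'}`. -/
noncomputable def Bplus {N : ℕ} (β : F) (i : ℕ) (J : Finset (Fin N))
    (f : MvPolynomial (Fin N) F) : MvPolynomial (Fin N) F :=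
  ∑ J' ∈ J.powersetCard i, zJ J' * DJ β 1 J' f

/-- `A_{ij} = ((z_i+z_j)/(z_i-z_j))(z_i ∂_i - z_j ∂_j)`. -/
noncomputable def Aop {N : ℕ} (i j : Fin N) (f : MvPolynomial (Fin N) F) :
    MvPolynomial (Fin N) F :=
  divExact (X i - X j) ((X i + X j) * (X i * pderiv i f - X j * pderiv j f))

/-- `H^{(S)} = ∑_{i ∈ S} (z_i ∂_i)² + β ∑_{i<j, i,j ∈ S} A_{ij}`. -/
noncomputable def Hop {N : ℕ} (β : F) (S : Finset (Fin N)) (f : MvPolynomial (Fin N) F) :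
    MvPolynomial (Fin N) F :=
  ∑ i ∈ S, X i * pderiv i (X i * pderiv i f)
    + β • ∑ i ∈ S, ∑ j ∈ S.filter (fun j => i < j), Aop i j f

/-- A polynomial is symmetric in the variables indexed by `S`. -/
def SymmOn {N : ℕ} (S : Finset (Fin N)) (f : MvPolynomial (Fin N) F) : Prop :=
  ∀ i ∈ S, ∀ j ∈ S, rename (Equiv.swap i j) f = f

/-- `phiCS β N lam i = (B⁺_i)^{λ_i - λ_{i+1}} ⋯ (B⁺_1)^{λ_1 - λ_2} · 1`,
where `lam` is 0-indexed: `lam (j-1) = λ_j`. -/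
noncomputable def phiCS (β : F) (N : ℕ) (lam : ℕ → ℕ) : ℕ → MvPolynomial (Fin N) F
  | 0 => 1
  | i + 1 => (fun f => Bplus β (i + 1) Finset.univ f)^[lam i - lam (i + 1)] (phiCS β N lam i)

/-- The monomial symmetric polynomial attached to an exponent vector. -/
noncomputable def msym (N : ℕ) (lam : Fin N → ℕ) : MvPolynomial (Fin N) F := by
  classical
  exact ∑ v ∈ (Finset.univ : Finset (Equiv.Perm (Fin N))).image
      (fun σ => fun i => lam (σ i)), ∏ i, X i ^ v i

/-- `𝐷̂_i = D_i + β(i-1) - β ∑_{j<i} (1 - K_{ij})` (0-indexed: `i-1` becomes `i`). -/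
noncomputable def Dhat {N : ℕ} (β : F) (i : Fin N) (f : MvPolynomial (Fin N) F) :
    MvPolynomial (Fin N) F :=
  Dop β i f + (β * ((i : ℕ) : F)) • f
    - β • ∑ j ∈ Finset.univ.filter (fun j => j < i), (f - Kswap i j f)

end CSDefs
section DunklProof
set_option linter.unusedSectionVars false
set_option maxHeartbeats 1000000
set_option synthInstance.maxHeartbeats 200000

open Equiv

variable {F : Type*} [Field F] [CharZero F] {N : ℕ}

local notation "P" => MvPolynomial (Fin N) F
local notation "L" => FractionRing (MvPolynomial (Fin N) F)
local notation "ι" => algebraMap (MvPolynomial (Fin N) F)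
  (FractionRing (MvPolynomial (Fin N) F))

lemma iota_inj : Function.Injective (ι) := IsFractionRing.injective P L

lemma X_sub_X_dvd (i j : Fin N) (f : P) :
    (X i - X j : P) ∣ (f - rename (Equiv.swap i j) f) := by
  induction f using MvPolynomial.induction_on with
  | C a => simp
  | add p q hp hq =>
      have : (p + q) - rename (Equiv.swap i j) (p + q)
          = (p - rename (Equiv.swap i j) p) + (q - rename (Equiv.swap i j) q) := by
        rw [map_add]; ring
      rw [this]; exact dvd_add hp hq
  | mul_X p n hp =>
      have : p * X n - rename (Equiv.swap i j) (p * X n)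
          = (p - rename (Equiv.swap i j) p) * X n
            + rename (Equiv.swap i j) p * (X n - X (Equiv.swap i j n)) := by
        rw [map_mul, rename_X]; ring
      rw [this]
      refine dvd_add (hp.mul_right _) (Dvd.dvd.mul_left ?_ _)
      rcases eq_or_ne n i with rfl | hni
      · simp
      rcases eq_or_ne n j with rfl | hnj
      · rw [Equiv.swap_apply_right]
        exact dvd_neg.mp ⟨1, by ring⟩
      · rw [Equiv.swap_apply_of_ne_of_ne hni hnj, sub_self]; exact dvd_zero _

lemma divExact_eq {d f c : P} (hd : d ≠ 0) (h : f = d * c) : divExact d f = c := by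
  have hx : ∃ c, f = d * c := ⟨c, h⟩
  rw [divExact, dif_pos hx]
  exact mul_left_cancel₀ hd (by rw [← hx.choose_spec, h])

lemma mul_divExact {d f : P} (hd : d ≠ 0) (h : d ∣ f) : d * divExact d f = f := by
  obtain ⟨c, rfl⟩ := h
  rw [divExact_eq hd rfl]

lemma X_sub_X_ne {i j : Fin N} (h : i ≠ j) : (X i - X j : P) ≠ 0 :=
  sub_ne_zero.mpr (fun e => h (MvPolynomial.X_injective e))

/-- lifted permutation action on the fraction field -/
noncomputable def Sp (σ : Equiv.Perm (Fin N)) : L ≃+* L :=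
  IsFractionRing.ringEquivOfRingEquiv ((renameEquiv F σ).toRingEquiv)

@[simp] lemma Sp_iota (σ : Equiv.Perm (Fin N)) (p : P) :
    Sp σ (ι p) = (ι (rename σ p) : L) := by
  simpa [Sp] using IsFractionRing.ringEquivOfRingEquiv_algebraMap
    ((renameEquiv F σ).toRingEquiv) p

lemma Sp_Sp (σ τ : Equiv.Perm (Fin N)) (u : L) :
    Sp σ (Sp τ u) = Sp (σ * τ) u := by
  have h : (((Sp σ).toRingHom.comp (Sp τ).toRingHom) : L →+* L)
      = ((Sp (σ * τ)).toRingHom : L →+* L) := by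
    apply IsLocalization.ringHom_ext (nonZeroDivisors P)
    refine RingHom.ext fun p => ?_
    show Sp σ (Sp τ (ι p)) = Sp (σ * τ) (ι p)
    rw [Sp_iota, Sp_iota, Sp_iota, rename_rename, Equiv.Perm.coe_mul]
  exact DFunLike.congr_fun h u

lemma iota_ne_zero {p : P} (h : p ≠ 0) : (ι p : L) ≠ 0 :=
  fun e => h (iota_inj (by simpa using e))

lemma exists_rep (u : L) : ∃ p q : P, q ≠ 0 ∧ u * ι q = ι p :=
  ⟨(IsLocalization.sec (nonZeroDivisors P) u).1,
   ((IsLocalization.sec (nonZeroDivisors P) u).2 : P),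
   nonZeroDivisors.ne_zero (IsLocalization.sec (nonZeroDivisors P) u).2.2,
   IsLocalization.sec_spec _ u⟩

/-- extension of `pderiv i` to the fraction field -/
noncomputable def Dz (i : Fin N) (u : L) : L :=
  (ι (pderiv i (IsLocalization.sec (nonZeroDivisors P) u).1)
      * ι ((IsLocalization.sec (nonZeroDivisors P) u).2 : P)
    - ι (IsLocalization.sec (nonZeroDivisors P) u).1
      * ι (pderiv i ((IsLocalization.sec (nonZeroDivisors P) u).2 : P)))
  / (ι ((IsLocalization.sec (nonZeroDivisors P) u).2 : P)) ^ 2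

lemma Dz_spec (i : Fin N) {p q : P} (hq : q ≠ 0) {u : L} (hu : u * ι q = ι p) :
    Dz i u = (ι (pderiv i p) * ι q - ι p * ι (pderiv i q)) / (ι q) ^ 2 := by
  set s := IsLocalization.sec (nonZeroDivisors P) u with hs
  have h2 : (s.2 : P) ≠ 0 := nonZeroDivisors.ne_zero s.2.2
  have hspec : u * ι (s.2 : P) = ι s.1 := IsLocalization.sec_spec _ u
  have e : s.1 * q = p * (s.2 : P) := by
    apply iota_inj
    rw [map_mul, map_mul, ← hspec, ← hu]; ring
  have e' : pderiv i s.1 * q + s.1 * pderiv i q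
      = pderiv i p * (s.2 : P) + p * pderiv i ((s.2 : P)) := by
    have h3 := congrArg (pderiv i) e
    simp only [pderiv_mul] at h3
    linear_combination h3
  have key : (pderiv i s.1 * (s.2 : P) - s.1 * pderiv i (s.2 : P)) * q ^ 2
      = (pderiv i p * q - p * pderiv i q) * (s.2 : P) ^ 2 := by
    linear_combination (q * (s.2 : P)) * e'
      - (pderiv i (s.2 : P) * q + pderiv i q * (s.2 : P)) * e
  have key2 := congrArg (ι) key
  simp only [map_mul, map_sub, map_pow] at key2
  rw [Dz, div_eq_div_iff (pow_ne_zero _ (iota_ne_zero h2)) (pow_ne_zero _ (iota_ne_zero hq))]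
  exact key2

lemma Dz_iota (i : Fin N) (p : P) : Dz i (ι p : L) = ι (pderiv i p) := by
  have hu : (ι p : L) * ι 1 = ι p := by rw [map_one, mul_one]
  rw [Dz_spec i one_ne_zero hu]
  simp

lemma Dz_add (i : Fin N) (u v : L) : Dz i (u + v) = Dz i u + Dz i v := by
  obtain ⟨a, b, hb, hub⟩ := exists_rep u
  obtain ⟨c, d, hd, hvd⟩ := exists_rep v
  have h3 : (u + v) * ι (b * d) = ι (a * d + c * b) := by
    rw [map_mul, map_add, map_mul, map_mul, ← hub, ← hvd]; ring
  rw [Dz_spec i hb hub, Dz_spec i hd hvd, Dz_spec i (mul_ne_zero hb hd) h3]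
  have hb' := iota_ne_zero hb
  have hd' := iota_ne_zero hd
  simp only [pderiv_mul, map_add, map_mul]
  field_simp
  ring

lemma Dz_mul (i : Fin N) (u v : L) : Dz i (u * v) = Dz i u * v + u * Dz i v := by
  obtain ⟨a, b, hb, hub⟩ := exists_rep u
  obtain ⟨c, d, hd, hvd⟩ := exists_rep v
  have h3 : (u * v) * ι (b * d) = ι (a * c) := by
    rw [map_mul, map_mul, ← hub, ← hvd]; ring
  rw [Dz_spec i hb hub, Dz_spec i hd hvd, Dz_spec i (mul_ne_zero hb hd) h3]
  have hb' := iota_ne_zero hb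
  have hd' := iota_ne_zero hd
  have hub' : u = ι a / ι b := by rw [eq_div_iff hb']; exact hub
  have hvd' : v = ι c / ι d := by rw [eq_div_iff hd']; exact hvd
  rw [hub', hvd']
  simp only [pderiv_mul, map_add, map_mul]
  field_simp
  ring

lemma Dz_zero (i : Fin N) : Dz i (0 : L) = 0 := by
  have hu : (0 : L) * ι 1 = ι 0 := by simp
  rw [Dz_spec i one_ne_zero hu]; simp

lemma Dz_neg (i : Fin N) (u : L) : Dz i (-u) = -Dz i u := by
  have := Dz_add i u (-u)
  rw [add_neg_cancel, Dz_zero] at this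
  linear_combination -this

lemma Dz_sub (i : Fin N) (u v : L) : Dz i (u - v) = Dz i u - Dz i v := by
  rw [sub_eq_add_neg, Dz_add, Dz_neg, sub_eq_add_neg]

lemma Dz_div (i : Fin N) (u v : L) (hv : v ≠ 0) :
    Dz i (u / v) = (Dz i u * v - u * Dz i v) / v ^ 2 := by
  have h := Dz_mul i (u / v) v
  rw [div_mul_cancel₀ _ hv] at h
  have h2 : Dz i (u / v) * v ^ 2 = Dz i u * v - u * Dz i v := by
    have huv : u / v * v = u := div_mul_cancel₀ _ hv
    calc Dz i (u / v) * v ^ 2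
        = (Dz i (u / v) * v + u / v * Dz i v) * v - (u / v * v) * Dz i v := by ring
      _ = Dz i u * v - u * Dz i v := by rw [← h, huv]
  rw [eq_div_iff (pow_ne_zero 2 hv), h2]

lemma pderiv_rename_perm (σ : Equiv.Perm (Fin N)) (i : Fin N) (p : P) :
    pderiv i (rename (σ : Fin N → Fin N) p) = rename (σ : Fin N → Fin N) (pderiv (σ⁻¹ i) p) := by
  have := pderiv_rename σ.injective (σ⁻¹ i) p
  rwa [Equiv.Perm.coe_inv, Equiv.apply_symm_apply] at this

lemma Dz_Sp (i : Fin N) (σ : Equiv.Perm (Fin N)) (u : L) :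
    Dz i (Sp σ u) = Sp σ (Dz (σ⁻¹ i) u) := by
  obtain ⟨p, q, hq, hu⟩ := exists_rep u
  have hqσ : rename (σ : Fin N → Fin N) q ≠ 0 := fun e =>
    hq ((rename_injective _ σ.injective) (by simpa using e))
  have hu' : Sp σ u * ι (rename (σ : Fin N → Fin N) q) = ι (rename (σ : Fin N → Fin N) p) := by
    rw [← Sp_iota, ← Sp_iota, ← map_mul, hu]
  rw [Dz_spec i hqσ hu', Dz_spec (σ⁻¹ i) hq hu, map_div₀, map_sub, map_mul, map_mul, map_pow,
    Sp_iota, Sp_iota, Sp_iota, Sp_iota, pderiv_rename_perm, pderiv_rename_perm]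

lemma Dz_X (i a : Fin N) : Dz i (ι (X a) : L) = if a = i then 1 else 0 := by
  rw [Dz_iota]
  rcases eq_or_ne a i with rfl | h
  · simp
  · simp [h, pderiv_X, Pi.single_apply, Ne.symm h]

noncomputable def zz (a : Fin N) : L := ι (X a)

noncomputable def del (a b : Fin N) (u : L) : L :=
  (u - Sp (Equiv.swap a b) u) / (zz a - zz b)

noncomputable def nabL (β : F) (i : Fin N) (u : L) : L :=
  Dz i u + ι (C β) * ∑ k ∈ Finset.univ.erase i, del i k u

noncomputable def DL (β : F) (i : Fin N) (u : L) : L := zz i * nabL β i u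

lemma zz_sub_ne {a b : Fin N} (h : a ≠ b) : (zz a - zz b : L) ≠ 0 := by
  rw [zz, zz, ← map_sub]
  exact iota_ne_zero (X_sub_X_ne h)

lemma Sp_zz (σ : Equiv.Perm (Fin N)) (a : Fin N) : Sp σ (zz a) = (zz (σ a) : L) := by
  simp [zz]

lemma Sp_C (σ : Equiv.Perm (Fin N)) (c : F) : Sp σ (ι (C c)) = (ι (C c) : L) := by
  simp

lemma Dz_zz (i a : Fin N) : Dz i (zz a : L) = if a = i then 1 else 0 := Dz_X i a

-- Sp of swap composed with Sp of swap, normalized by conjugation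
lemma Sp_swap_conj (a b c d : Fin N) (u : L) :
    Sp (Equiv.swap a b) (Sp (Equiv.swap c d) u)
      = Sp (Equiv.swap (Equiv.swap a b c) (Equiv.swap a b d)) (Sp (Equiv.swap a b) u) := by
  rw [Sp_Sp, Sp_Sp, Equiv.mul_swap_eq_swap_mul]

lemma Sp_one (u : L) : Sp (1 : Equiv.Perm (Fin N)) u = u := by
  have h2 : ((Sp (1 : Equiv.Perm (Fin N))).toRingHom : L →+* L) = RingHom.id L := by
    apply IsLocalization.ringHom_ext (nonZeroDivisors P)
    refine RingHom.ext fun p => ?_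
    show Sp 1 (ι p) = ι p
    rw [Sp_iota]
    simp
  exact DFunLike.congr_fun h2 u

lemma Sp_swap_swap (a b : Fin N) (u : L) :
    Sp (Equiv.swap a b) (Sp (Equiv.swap a b) u) = u := by
  rw [Sp_Sp, Equiv.swap_mul_self, Sp_one]

lemma del_add (a b : Fin N) (u v : L) : del a b (u + v) = del a b u + del a b v := by
  rw [del, del, del, map_add]; ring

lemma del_sub (a b : Fin N) (u v : L) : del a b (u - v) = del a b u - del a b v := by
  rw [del, del, del, map_sub]; ring

lemma del_Cmul (a b : Fin N) (c : F) (u : L) :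
    del a b (ι (C c) * u) = ι (C c) * del a b u := by
  rw [del, del, map_mul, Sp_C]; ring

lemma nabL_add (β : F) (i : Fin N) (u v : L) :
    nabL β i (u + v) = nabL β i u + nabL β i v := by
  simp only [nabL, Dz_add, del_add, Finset.sum_add_distrib]; ring

lemma nabL_Cmul (β : F) (i : Fin N) (c : F) (u : L) :
    nabL β i (ι (C c) * u) = ι (C c) * nabL β i u := by
  have hd : Dz i (ι (C c) * u) = ι (C c) * Dz i u := by
    rw [Dz_mul, Dz_iota]
    simp
  simp only [nabL, hd, del_Cmul, ← Finset.mul_sum]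
  ring

lemma DL_add (β : F) (i : Fin N) (u v : L) : DL β i (u + v) = DL β i u + DL β i v := by
  rw [DL, DL, DL, nabL_add]; ring

lemma DL_Cmul (β : F) (i : Fin N) (c : F) (u : L) :
    DL β i (ι (C c) * u) = ι (C c) * DL β i u := by
  rw [DL, DL, nabL_Cmul]; ring

lemma del_zmul_ne {i k j : Fin N} (hik : i ≠ k) (hkj : k ≠ j) (hij : i ≠ j) (u : L) :
    del i k (zz j * u) = zz j * del i k u := by
  rw [del, del, map_mul, Sp_zz, Equiv.swap_apply_of_ne_of_ne (Ne.symm hij) (Ne.symm hkj)]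
  ring

lemma del_zmul_eq {i j : Fin N} (hij : i ≠ j) (u : L) :
    del i j (zz j * u) = zz j * del i j u - Sp (Equiv.swap i j) u := by
  rw [del, del, map_mul, Sp_zz, Equiv.swap_apply_right]
  have h : (zz i - zz j : L) ≠ 0 := zz_sub_ne hij
  field_simp
  ring

lemma nabL_zmul_ne (β : F) {i j : Fin N} (hij : i ≠ j) (u : L) :
    nabL β i (zz j * u) = zz j * nabL β i u - ι (C β) * Sp (Equiv.swap i j) u := by
  rw [nabL, nabL]
  have hDz : Dz i (zz j * u) = zz j * Dz i u := by
    rw [Dz_mul, Dz_zz, if_neg (Ne.symm hij)]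
    ring
  have hj : j ∈ Finset.univ.erase i := Finset.mem_erase.mpr ⟨Ne.symm hij, Finset.mem_univ _⟩
  have hsum : ∑ k ∈ Finset.univ.erase i, del i k (zz j * u)
      = zz j * ∑ k ∈ Finset.univ.erase i, del i k u - Sp (Equiv.swap i j) u := by
    have hterm : ∀ k ∈ Finset.univ.erase i, del i k (zz j * u)
        = zz j * del i k u + (if k = j then -(Sp (Equiv.swap i j) u) else 0) := by
      intro k hk
      have hki : k ≠ i := (Finset.mem_erase.mp hk).1
      rcases eq_or_ne k j with rfl | hkj
      · rw [del_zmul_eq hij, if_pos rfl]; ring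
      · rw [del_zmul_ne (Ne.symm hki) hkj hij, if_neg hkj]; ring
    rw [Finset.sum_congr rfl hterm, Finset.sum_add_distrib, Finset.sum_ite_eq' _ j,
      if_pos hj, Finset.mul_sum]
    ring
  rw [hDz, hsum]
  ring

lemma Sp_del (σ : Equiv.Perm (Fin N)) (a b : Fin N) (u : L) :
    Sp σ (del a b u) = del (σ a) (σ b) (Sp σ u) := by
  rw [del, del, map_div₀, map_sub, map_sub, Sp_zz, Sp_zz, Sp_Sp,
    Equiv.mul_swap_eq_swap_mul, ← Sp_Sp]

lemma Sp_Dz (σ : Equiv.Perm (Fin N)) (i : Fin N) (u : L) :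
    Sp σ (Dz i u) = Dz (σ i) (Sp σ u) := by
  rw [Dz_Sp, Equiv.Perm.coe_inv, Equiv.symm_apply_apply]

lemma Sp_nabL (σ : Equiv.Perm (Fin N)) (β : F) (i : Fin N) (u : L) :
    Sp σ (nabL β i u) = nabL β (σ i) (Sp σ u) := by
  rw [nabL, nabL, map_add, map_mul, Sp_C, Sp_Dz]
  congr 1
  rw [map_sum]
  congr 1
  refine Finset.sum_nbij' (fun k => σ k) (fun k => σ⁻¹ k) ?_ ?_ ?_ ?_ ?_
  · intro a ha
    simp only [Finset.mem_erase, Finset.mem_univ, and_true] at ha ⊢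
    exact fun e => ha (σ.injective e)
  · intro a ha
    simp only [Finset.mem_erase, Finset.mem_univ, and_true] at ha ⊢
    intro e
    apply ha
    rw [← e, Equiv.Perm.coe_inv, Equiv.apply_symm_apply]
  · intro a _; exact σ.symm_apply_apply a
  · intro a _; exact σ.apply_symm_apply a
  · intro a _
    exact Sp_del σ i a u

lemma Sp_DL (σ : Equiv.Perm (Fin N)) (β : F) (i : Fin N) (u : L) :
    Sp σ (DL β i u) = DL β (σ i) (Sp σ u) := by
  rw [DL, DL, map_mul, Sp_zz, Sp_nabL]

lemma iota_nabla (β : F) (i : Fin N) (f : P) : (ι (nabla β i f) : L) = nabL β i (ι f) := by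
  rw [nabla, nabL, smul_eq_C_mul, map_add, map_mul, Dz_iota, map_sum]
  congr 1
  congr 1
  refine Finset.sum_congr rfl fun k hk => ?_
  have hki : k ≠ i := (Finset.mem_erase.mp hk).1
  have hne : (X i - X k : P) ≠ 0 := X_sub_X_ne (Ne.symm hki)
  have hdvd := X_sub_X_dvd i k f
  have hmul := congrArg (ι) (mul_divExact hne hdvd)
  rw [map_mul, map_sub, map_sub] at hmul
  rw [del, eq_div_iff (zz_sub_ne (Ne.symm hki)), Sp_iota, zz, zz, ← map_sub, ← map_mul,
    ← map_sub]
  exact congrArg (ι) (by simp only [Kswap]; rw [mul_comm]; exact mul_divExact hne hdvd)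

lemma iota_Dop (β : F) (i : Fin N) (f : P) : (ι (Dop β i f) : L) = DL β i (ι f) := by
  rw [Dop, DL, map_mul, iota_nabla, zz]

lemma Dop_add (β : F) (i : Fin N) (f g : P) :
    Dop β i (f + g) = Dop β i f + Dop β i g := by
  apply iota_inj
  rw [map_add, iota_Dop, iota_Dop, iota_Dop, map_add, DL_add]

lemma Dop_smul (β : F) (i : Fin N) (c : F) (f : P) :
    Dop β i (c • f) = c • Dop β i f := by
  apply iota_inj
  rw [smul_eq_C_mul, smul_eq_C_mul, map_mul, iota_Dop, iota_Dop, map_mul, DL_Cmul]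

lemma Kswap_Dop (β : F) (a b c : Fin N) (f : P) :
    Kswap a b (Dop β c f) = Dop β (Equiv.swap a b c) (Kswap a b f) := by
  apply iota_inj
  rw [Kswap, Kswap, ← Sp_iota, iota_Dop, iota_Dop, Sp_DL, Sp_iota]

lemma pderiv_pderiv_comm (i j : Fin N) (p : P) :
    pderiv i (pderiv j p) = pderiv j (pderiv i p) := by
  induction p using MvPolynomial.induction_on with
  | C a => simp
  | add p q hp hq => simp [hp, hq]
  | mul_X p n hp =>
      have e : ∀ a b : Fin N, (pderiv a) ((pderiv b) (X n : P)) = 0 := by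
        intro a b
        rcases eq_or_ne b n with rfl | h
        · simp
        · simp [pderiv_X, Pi.single_apply, Ne.symm h]
      simp only [pderiv_mul, map_add, hp, e]
      ring

lemma Dz_comm (i j : Fin N) (u : L) : Dz i (Dz j u) = Dz j (Dz i u) := by
  obtain ⟨p, q, hq, hu⟩ := exists_rep u
  have hq2 : (q * q : P) ≠ 0 := mul_ne_zero hq hq
  have step : ∀ a b : Fin N, Dz a (Dz b u)
      = (ι (pderiv a (pderiv b p * q - p * pderiv b q)) * ι (q * q)
          - ι (pderiv b p * q - p * pderiv b q) * ι (pderiv a (q * q))) / (ι (q * q)) ^ 2 := by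
    intro a b
    have hqne := iota_ne_zero hq
    have h1 : Dz b u = ι (pderiv b p * q - p * pderiv b q) / ι (q * q) := by
      rw [Dz_spec b hq hu, map_sub, map_mul, map_mul, map_mul, pow_two]
    have h2 : Dz b u * ι (q * q) = ι (pderiv b p * q - p * pderiv b q) := by
      rw [h1, div_mul_cancel₀ _ (iota_ne_zero hq2)]
    exact Dz_spec a hq2 h2
  rw [step i j, step j i]
  have key : pderiv i (pderiv j p * q - p * pderiv j q) * (q * q)
        - (pderiv j p * q - p * pderiv j q) * pderiv i (q * q)
      = pderiv j (pderiv i p * q - p * pderiv i q) * (q * q)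
        - (pderiv i p * q - p * pderiv i q) * pderiv j (q * q) := by
    simp only [map_sub, pderiv_mul]
    linear_combination (q * q * q) * pderiv_pderiv_comm i j p
      - (p * q * q) * pderiv_pderiv_comm i j q
  congr 1
  rw [← map_mul, ← map_mul, ← map_sub, ← map_mul, ← map_mul, ← map_sub]
  exact congrArg (ι) key

lemma Dz_del_comm {i j l : Fin N} (hij : i ≠ j) (hli : l ≠ i) (hjl : j ≠ l) (u : L) :
    Dz i (del j l u) = del j l (Dz i u) := by
  have hd : (zz j - zz l : L) ≠ 0 := zz_sub_ne hjl
  rw [del, del, Dz_div _ _ _ hd, Dz_sub]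
  have h1 : Dz i (Sp (Equiv.swap j l) u) = Sp (Equiv.swap j l) (Dz i u) := by
    rw [Dz_Sp, Equiv.swap_inv,
      show (Equiv.swap j l) i = i from
        Equiv.swap_apply_of_ne_of_ne hij (Ne.symm hli)]
  have h2 : Dz i (zz j - zz l : L) = 0 := by
    rw [Dz_sub, Dz_zz, Dz_zz, if_neg (Ne.symm hij), if_neg hli, sub_zero]
  rw [h1, h2]
  field_simp
  ring

lemma Dz_del_cross {i j : Fin N} (hij : i ≠ j) (u : L) :
    Dz i (del j i u) - del j i (Dz i u)
      = (u - Sp (Equiv.swap i j) u) / (zz j - zz i) ^ 2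
        + (Sp (Equiv.swap i j) (Dz i u) - Sp (Equiv.swap i j) (Dz j u)) / (zz j - zz i) := by
  have hd : (zz j - zz i : L) ≠ 0 := zz_sub_ne (Ne.symm hij)
  rw [del, del, Equiv.swap_comm j i, Dz_div _ _ _ hd, Dz_sub]
  have h1 : Dz i (Sp (Equiv.swap i j) u) = Sp (Equiv.swap i j) (Dz j u) := by
    rw [Dz_Sp, Equiv.swap_inv, Equiv.swap_apply_left]
  have h2 : Dz i (zz j - zz i : L) = 0 - 1 := by
    rw [Dz_sub, Dz_zz, Dz_zz, if_neg (Ne.symm hij), if_pos rfl]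
  rw [h1, h2]
  field_simp
  ring

lemma beta_part {i j : Fin N} (hij : i ≠ j) (u : L) :
    ∑ l ∈ Finset.univ.erase j, (Dz i (del j l u) - del j l (Dz i u))
      = ∑ k ∈ Finset.univ.erase i, (Dz j (del i k u) - del i k (Dz j u)) := by
  have hi : i ∈ Finset.univ.erase j := Finset.mem_erase.mpr ⟨hij, Finset.mem_univ _⟩
  have hj : j ∈ Finset.univ.erase i := Finset.mem_erase.mpr ⟨Ne.symm hij, Finset.mem_univ _⟩
  rw [Finset.sum_eq_single_of_mem i hi (fun l hl hli => by
    rw [Dz_del_comm hij hli (Ne.symm (Finset.mem_erase.mp hl).1), sub_self])]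
  rw [Finset.sum_eq_single_of_mem j hj (fun k hk hkj => by
    rw [Dz_del_comm (Ne.symm hij) hkj (Ne.symm (Finset.mem_erase.mp hk).1), sub_self])]
  rw [Dz_del_cross hij u, Dz_del_cross (Ne.symm hij) u, Equiv.swap_comm j i]
  have h1 : (zz j - zz i : L) ≠ 0 := zz_sub_ne (Ne.symm hij)
  have h2 : (zz i - zz j : L) ≠ 0 := zz_sub_ne hij
  field_simp
  ring

lemma del_antisymm (a b : Fin N) (u : L) : del b a u = -del a b u := by
  rw [del, del, Equiv.swap_comm b a,
    show (zz b - zz a : L) = -(zz a - zz b) by ring, div_neg]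

lemma del_neg (a b : Fin N) (u : L) : del a b (-u) = -del a b u := by
  rw [del, del, map_neg]
  ring

lemma del_sum (a b : Fin N) {γ : Type*} (s : Finset γ) (f : γ → L) :
    del a b (∑ x ∈ s, f x) = ∑ x ∈ s, del a b (f x) := by
  rw [del, map_sum, ← Finset.sum_sub_distrib, Finset.sum_div]
  rfl


lemma div_div_helper1 {K : Type*} [Field K] (p q a b c : K) (ha : a ≠ 0) (hb : b ≠ 0)
    (hc : c ≠ 0) : (p / b - q / c) / a = (p * c - q * b) / (a * (b * c)) := by
  field_simp

lemma div_div_helper2 {K : Type*} [Field K] (p q a b c : K) (ha : a ≠ 0) (hb : b ≠ 0)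
    (hc : c ≠ 0) : (p / b + q / c) / a = (p * c + q * b) / (a * (b * c)) := by
  have h := div_div_helper1 p (-q) a b c ha hb hc
  rw [neg_div, sub_neg_eq_add] at h
  rw [h]
  congr 1
  ring

lemma triple_field {K : Type*} [Field K] (x y w u u1 u2 u3 u4 u5 : K)
    (h1 : x - y ≠ 0) (h2 : y - w ≠ 0) (h3 : x - w ≠ 0) :
    ((u - u2) / (y - w) - (u1 - u4) / (x - w)) / (x - y)
      - ((u - u1) / (x - y) - (u2 - u5) / (x - w)) / (y - w)
    + (((u - u2) / (y - w) - (u3 - u5) / (y - x)) / (x - w)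
      - ((u - u3) / (x - w) - (u2 - u4) / (x - y)) / (y - w))
    + (-(((u - u1) / (x - y) - (u3 - u4) / (w - y)) / (x - w))
      - -(((u - u3) / (x - w) - (u1 - u5) / (y - w)) / (x - y))) = 0 := by
  rw [show y - x = -(x - y) by ring, show w - y = -(y - w) by ring, div_neg, div_neg,
    sub_neg_eq_add, sub_neg_eq_add, sub_neg_eq_add]
  rw [div_div_helper1 _ _ _ _ _ h1 h2 h3, div_div_helper1 _ _ _ _ _ h2 h1 h3,
    div_div_helper2 _ _ _ _ _ h3 h2 h1, div_div_helper1 _ _ _ _ _ h2 h3 h1,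
    div_div_helper2 _ _ _ _ _ h3 h1 h2, div_div_helper1 _ _ _ _ _ h1 h3 h2]
  rw [show (y-w) * ((x-y) * (x-w)) = (x-y) * ((y-w) * (x-w)) by ring,
    show (x-w) * ((y-w) * (x-y)) = (x-y) * ((y-w) * (x-w)) by ring,
    show (y-w) * ((x-w) * (x-y)) = (x-y) * ((y-w) * (x-w)) by ring,
    show (x-w) * ((x-y) * (y-w)) = (x-y) * ((y-w) * (x-w)) by ring,
    show (x-y) * ((x-w) * (y-w)) = (x-y) * ((y-w) * (x-w)) by ring]
  rw [div_sub_div_same, div_sub_div_same, ← neg_div, ← add_div, ← add_div,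
    ← add_div, div_eq_zero_iff]
  left
  ring

lemma del_del_disjoint {i k j l : Fin N} (h1 : i ≠ j) (h2 : i ≠ l) (h3 : k ≠ j) (h4 : k ≠ l)
    (hik : i ≠ k) (hjl : j ≠ l) (u : L) :
    del i k (del j l u) = del j l (del i k u) := by
  have e1 : (Equiv.swap i k) j = j := Equiv.swap_apply_of_ne_of_ne (Ne.symm h1) (Ne.symm h3)
  have e2 : (Equiv.swap i k) l = l := Equiv.swap_apply_of_ne_of_ne (Ne.symm h2) (Ne.symm h4)
  have e3 : (Equiv.swap j l) i = i := Equiv.swap_apply_of_ne_of_ne h1 h2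
  have e4 : (Equiv.swap j l) k = k := Equiv.swap_apply_of_ne_of_ne h3 h4
  have hcomm : Equiv.swap i k * Equiv.swap j l = Equiv.swap j l * Equiv.swap i k := by
    have := Equiv.mul_swap_eq_swap_mul (Equiv.swap i k) j l
    rwa [e1, e2] at this
  have hzik : (zz i - zz k : L) ≠ 0 := zz_sub_ne hik
  have hzjl : (zz j - zz l : L) ≠ 0 := zz_sub_ne hjl
  simp only [del, map_div₀, map_sub, Sp_zz, Sp_Sp, e1, e2, e3, e4]
  rw [hcomm]
  set x1 := (zz i : L)
  set x2 := (zz k : L)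
  set y1 := (zz j : L)
  set y2 := (zz l : L)
  set A1 := Sp (Equiv.swap j l) u
  set A2 := Sp (Equiv.swap i k) u
  set A3 := Sp (Equiv.swap j l * Equiv.swap i k) u
  rw [div_sub_div_same, div_sub_div_same, div_div, div_div, mul_comm (y1 - y2) (x1 - x2)]
  congr 1
  ring

lemma del_del_triple {i j m : Fin N} (hij : i ≠ j) (him : i ≠ m) (hjm : j ≠ m) (u : L) :
    (del i j (del j m u) - del j m (del i j u))
    + (del i m (del j m u) - del j m (del i m u))
    + (del i m (del j i u) - del j i (del i m u)) = 0 := by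
  -- point values of swaps
  have aij_i : (Equiv.swap i j) i = j := Equiv.swap_apply_left i j
  have aij_j : (Equiv.swap i j) j = i := Equiv.swap_apply_right i j
  have aij_m : (Equiv.swap i j) m = m := Equiv.swap_apply_of_ne_of_ne (Ne.symm him) (Ne.symm hjm)
  have aim_i : (Equiv.swap i m) i = m := Equiv.swap_apply_left i m
  have aim_j : (Equiv.swap i m) j = j := Equiv.swap_apply_of_ne_of_ne (Ne.symm hij) hjm
  have aim_m : (Equiv.swap i m) m = i := Equiv.swap_apply_right i m
  have ajm_i : (Equiv.swap j m) i = i := Equiv.swap_apply_of_ne_of_ne hij him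
  have ajm_j : (Equiv.swap j m) j = m := Equiv.swap_apply_left j m
  have ajm_m : (Equiv.swap j m) m = j := Equiv.swap_apply_right j m
  -- canonical three-cycles: ρ = swap i j * swap j m, ρ' = swap j m * swap i j
  have hB : Equiv.swap j m * Equiv.swap i m = Equiv.swap i j * Equiv.swap j m := by
    have := Equiv.mul_swap_eq_swap_mul (Equiv.swap j m) i m
    rwa [ajm_i, ajm_m] at this
  have hA : Equiv.swap i m * Equiv.swap j m = Equiv.swap j m * Equiv.swap i j := by
    have := Equiv.mul_swap_eq_swap_mul (Equiv.swap j m) i j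
    rw [ajm_i, ajm_j] at this
    exact this.symm
  have hE : Equiv.swap i m * Equiv.swap i j = Equiv.swap i j * Equiv.swap j m := by
    have := Equiv.mul_swap_eq_swap_mul (Equiv.swap i j) j m
    rw [aij_j, aij_m] at this
    exact this.symm
  have hG : Equiv.swap i j * Equiv.swap i m = Equiv.swap j m * Equiv.swap i j := by
    have := Equiv.mul_swap_eq_swap_mul (Equiv.swap i j) i m
    rwa [aij_i, aij_m] at this
  have h1 : (zz i - zz j : L) ≠ 0 := zz_sub_ne hij
  have h2 : (zz j - zz m : L) ≠ 0 := zz_sub_ne hjm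
  have h3 : (zz i - zz m : L) ≠ 0 := zz_sub_ne him
  have h4 : (zz j - zz i : L) ≠ 0 := zz_sub_ne (Ne.symm hij)
  rw [del_antisymm i j u, del_antisymm i j (del i m u), del_neg]
  simp only [del, map_div₀, map_sub, Sp_zz, Sp_Sp, aij_i, aij_j, aij_m, aim_i, aim_j, aim_m,
    ajm_i, ajm_j, ajm_m, hA, hB, hE, hG]
  set x := (zz i : L)
  set y := (zz j : L)
  set w := (zz m : L)
  set u1 := Sp (Equiv.swap i j) u
  set u2 := Sp (Equiv.swap j m) u
  set u3 := Sp (Equiv.swap i m) u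
  set u4 := Sp (Equiv.swap i j * Equiv.swap j m) u
  set u5 := Sp (Equiv.swap j m * Equiv.swap i j) u
  exact triple_field x y w u u1 u2 u3 u4 u5 h1 h2 h3

lemma beta2_part {i j : Fin N} (hij : i ≠ j) (u : L) :
    ∑ k ∈ Finset.univ.erase i, ∑ l ∈ Finset.univ.erase j,
      (del i k (del j l u) - del j l (del i k u)) = 0 := by
  classical
  set U : Finset (Fin N) := (Finset.univ.erase i).erase j with hU
  have hUij : ∀ m ∈ U, m ≠ i ∧ m ≠ j := by
    intro m hm
    have h1 := Finset.mem_erase.mp hm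
    have h2 := Finset.mem_erase.mp h1.2
    exact ⟨h2.1, h1.1⟩
  have hUj : (Finset.univ.erase j).erase i = U := Finset.erase_right_comm
  have hi : i ∈ Finset.univ.erase j := Finset.mem_erase.mpr ⟨hij, Finset.mem_univ _⟩
  have hjm : j ∈ Finset.univ.erase i := Finset.mem_erase.mpr ⟨Ne.symm hij, Finset.mem_univ _⟩
  have inner : ∀ k, ∑ l ∈ Finset.univ.erase j, (del i k (del j l u) - del j l (del i k u))
      = (del i k (del j i u) - del j i (del i k u))
        + ∑ l ∈ U, (del i k (del j l u) - del j l (del i k u)) := by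
    intro k
    rw [← Finset.insert_erase hi, Finset.sum_insert (Finset.notMem_erase i _), hUj]
  rw [Finset.sum_congr rfl (fun k _ => inner k), Finset.sum_add_distrib]
  have houter1 : ∑ k ∈ Finset.univ.erase i, (del i k (del j i u) - del j i (del i k u))
      = (del i j (del j i u) - del j i (del i j u))
        + ∑ m ∈ U, (del i m (del j i u) - del j i (del i m u)) := by
    rw [← Finset.insert_erase hjm, Finset.sum_insert (Finset.notMem_erase j _)]
  have houter2 : ∑ k ∈ Finset.univ.erase i,
        ∑ l ∈ U, (del i k (del j l u) - del j l (del i k u))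
      = (∑ l ∈ U, (del i j (del j l u) - del j l (del i j u)))
        + ∑ m ∈ U, ∑ l ∈ U, (del i m (del j l u) - del j l (del i m u)) := by
    rw [← Finset.insert_erase hjm, Finset.sum_insert (Finset.notMem_erase j _)]
  rw [houter1, houter2]
  have Eji : del i j (del j i u) - del j i (del i j u) = 0 := by
    rw [del_antisymm i j u, del_neg, del_antisymm i j (del i j u)]
    ring
  have hdiag : ∀ m ∈ U, ∑ l ∈ U, (del i m (del j l u) - del j l (del i m u))
      = del i m (del j m u) - del j m (del i m u) := by
    intro m hm
    refine Finset.sum_eq_single_of_mem m hm (fun l hl hlm => ?_)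
    obtain ⟨hmi, hmj⟩ := hUij m hm
    obtain ⟨hli, hlj⟩ := hUij l hl
    rw [del_del_disjoint hij (Ne.symm hli) hmj (Ne.symm hlm) (Ne.symm hmi) (Ne.symm hlj), sub_self]
  rw [Finset.sum_congr rfl hdiag, Eji]
  have key : ∀ m ∈ U,
      ((del i m (del j i u) - del j i (del i m u))
        + ((del i j (del j m u) - del j m (del i j u))
        + (del i m (del j m u) - del j m (del i m u)))) = 0 := by
    intro m hm
    obtain ⟨hmi, hmj⟩ := hUij m hm
    have := del_del_triple hij (Ne.symm hmi) (Ne.symm hmj) u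
    linear_combination this
  calc (0 : L) + ∑ m ∈ U, (del i m (del j i u) - del j i (del i m u))
        + ((∑ l ∈ U, (del i j (del j l u) - del j l (del i j u)))
          + ∑ m ∈ U, (del i m (del j m u) - del j m (del i m u)))
      = ∑ m ∈ U, ((del i m (del j i u) - del j i (del i m u))
          + ((del i j (del j m u) - del j m (del i j u))
          + (del i m (del j m u) - del j m (del i m u)))) := by
        rw [Finset.sum_add_distrib, Finset.sum_add_distrib]
        ring
    _ = 0 := by rw [Finset.sum_congr rfl key, Finset.sum_const_zero]

lemma Dz_sum (i : Fin N) {γ : Type*} (s : Finset γ) (f : γ → L) :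
    Dz i (∑ x ∈ s, f x) = ∑ x ∈ s, Dz i (f x) := by
  classical
  induction s using Finset.cons_induction with
  | empty => simp [Dz_zero]
  | cons a s ha ih =>
      rw [Finset.sum_cons, Finset.sum_cons, Dz_add, ih]

lemma Dz_Cmul (a : Fin N) (c : F) (u : L) : Dz a (ι (C c) * u) = ι (C c) * Dz a u := by
  rw [Dz_mul, Dz_iota]
  simp

lemma nabL_comm (β : F) {i j : Fin N} (hij : i ≠ j) (u : L) :
    nabL β i (nabL β j u) = nabL β j (nabL β i u) := by
  have expand : ∀ a b : Fin N, nabL β a (nabL β b u)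
      = Dz a (Dz b u) + ι (C β) * (∑ l ∈ Finset.univ.erase b, Dz a (del b l u))
        + ι (C β) * (∑ k ∈ Finset.univ.erase a, del a k (Dz b u))
        + ι (C β) * (ι (C β) * ∑ k ∈ Finset.univ.erase a,
            ∑ l ∈ Finset.univ.erase b, del a k (del b l u)) := by
    intro a b
    rw [nabL, nabL, Dz_add, Dz_Cmul, Dz_sum]
    have hsum : ∑ k ∈ Finset.univ.erase a,
        del a k (Dz b u + ι (C β) * ∑ l ∈ Finset.univ.erase b, del b l u)
        = ∑ k ∈ Finset.univ.erase a, del a k (Dz b u)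
          + ι (C β) * ∑ k ∈ Finset.univ.erase a,
              ∑ l ∈ Finset.univ.erase b, del a k (del b l u) := by
      rw [Finset.sum_congr rfl (fun k _ => by
        rw [del_add, del_Cmul, del_sum]), Finset.sum_add_distrib, Finset.mul_sum]
    rw [hsum]
    ring
  rw [expand i j, expand j i]
  set c : L := ι (C β)
  have hA : (∑ l ∈ Finset.univ.erase j, Dz i (del j l u))
        - (∑ l ∈ Finset.univ.erase j, del j l (Dz i u))
      = (∑ k ∈ Finset.univ.erase i, Dz j (del i k u))
        - (∑ k ∈ Finset.univ.erase i, del i k (Dz j u)) := by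
    have h := beta_part hij u
    rwa [Finset.sum_sub_distrib, Finset.sum_sub_distrib] at h
  have hB : (∑ k ∈ Finset.univ.erase i, ∑ l ∈ Finset.univ.erase j, del i k (del j l u))
      = ∑ l ∈ Finset.univ.erase j, ∑ k ∈ Finset.univ.erase i, del j l (del i k u) := by
    have h := beta2_part hij u
    simp only [Finset.sum_sub_distrib] at h
    rw [sub_eq_zero] at h
    rw [h]
    exact Finset.sum_comm
  have h1 : Dz i (Dz j u) = Dz j (Dz i u) := Dz_comm i j u
  linear_combination h1 + c * hA + c * c * hB

lemma DL_comm (β : F) {i j : Fin N} (hij : i ≠ j) (u : L) :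
    DL β i (DL β j u) - DL β j (DL β i u)
      = ι (C β) * (DL β j (Sp (Equiv.swap i j) u) - DL β i (Sp (Equiv.swap i j) u)) := by
  have e1 : DL β i (DL β j u)
      = zz i * (zz j * nabL β i (nabL β j u) - ι (C β) * Sp (Equiv.swap i j) (nabL β j u)) := by
    rw [DL, DL, nabL_zmul_ne β hij]
  have e2 : DL β j (DL β i u)
      = zz j * (zz i * nabL β j (nabL β i u) - ι (C β) * Sp (Equiv.swap j i) (nabL β i u)) := by
    rw [DL, DL, nabL_zmul_ne β (Ne.symm hij)]
  rw [e1, e2, Equiv.swap_comm j i, nabL_comm β hij u]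
  have f1 : Sp (Equiv.swap i j) (nabL β j u) = nabL β i (Sp (Equiv.swap i j) u) := by
    rw [Sp_nabL, Equiv.swap_apply_right]
  have f2 : Sp (Equiv.swap i j) (nabL β i u) = nabL β j (Sp (Equiv.swap i j) u) := by
    rw [Sp_nabL, Equiv.swap_apply_left]
  rw [f1, f2, DL, DL]
  ring

lemma Dop_comm (β : F) {i j : Fin N} (hij : i ≠ j) (f : P) :
    Dop β i (Dop β j f) - Dop β j (Dop β i f)
      = β • (Dop β j (Kswap i j f) - Dop β i (Kswap i j f)) := by
  apply iota_inj
  rw [map_sub, smul_eq_C_mul, map_mul, map_sub, iota_Dop, iota_Dop, iota_Dop, iota_Dop,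
    iota_Dop, iota_Dop, Kswap, ← Sp_iota]
  exact DL_comm β hij (ι f)

lemma Dop_zero (β : F) (i : Fin N) : Dop β i (0 : P) = 0 := by
  have h : Dop β i (0 : P) = Dop β i 0 + Dop β i 0 := by
    simpa using Dop_add β i 0 0
  linear_combination -h

lemma Dop_sub (β : F) (i : Fin N) (f g : P) :
    Dop β i (f - g) = Dop β i f - Dop β i g := by
  have h : f - g = f + (-1 : F) • g := by
    rw [neg_one_smul]; ring
  rw [h, Dop_add, Dop_smul, neg_one_smul]
  ring

lemma Dop_sum (β : F) (c : Fin N) {γ : Type*} (s : Finset γ) (g : γ → P) :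
    Dop β c (∑ x ∈ s, g x) = ∑ x ∈ s, Dop β c (g x) := by
  classical
  induction s using Finset.cons_induction with
  | empty => simpa using Dop_zero β c
  | cons a s ha ih => rw [Finset.sum_cons, Finset.sum_cons, Dop_add, ih]

lemma Kswap_Dop_iter (β : F) (a b c : Fin N) (r : ℕ) (f : P) :
    Kswap a b ((Dop β c)^[r] f)
      = (Dop β (Equiv.swap a b c))^[r] (Kswap a b f) := by
  induction r with
  | zero => rfl
  | succ r ih =>
      rw [Function.iterate_succ_apply' (Dop β c) r f, Kswap_Dop, ih,
        ← Function.iterate_succ_apply' (Dop β (Equiv.swap a b c)) r (Kswap a b f)]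

lemma Dop_pow_comm (β : F) {i j : Fin N} (hij : i ≠ j) (r : ℕ) (f : P) :
    (Dop β i)^[r] (Dop β j f) - Dop β j ((Dop β i)^[r] f)
      = β • ((Dop β j)^[r] (Kswap i j f) - (Dop β i)^[r] (Kswap i j f)) := by
  induction r with
  | zero => simp
  | succ r ih =>
      have e1 : (Dop β i)^[r] (Dop β j f) = Dop β j ((Dop β i)^[r] f)
          + β • ((Dop β j)^[r] (Kswap i j f) - (Dop β i)^[r] (Kswap i j f)) := by
        rw [← ih]; ring
      have e2 := Dop_comm β hij ((Dop β i)^[r] f)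
      have e3 : Kswap i j ((Dop β i)^[r] f) = (Dop β j)^[r] (Kswap i j f) := by
        have h := Kswap_Dop_iter β i j i r f
        rwa [Equiv.swap_apply_left] at h
      rw [e3] at e2
      rw [Function.iterate_succ_apply' (Dop β i) r (Dop β j f), e1, Dop_add, Dop_smul,
        Dop_sub, Function.iterate_succ_apply' (Dop β i) r f,
        Function.iterate_succ_apply' (Dop β j) r (Kswap i j f),
        Function.iterate_succ_apply' (Dop β i) r (Kswap i j f)]
      simp only [smul_eq_C_mul] at e2 ⊢
      linear_combination e2

lemma final_helper (β : F) (r : ℕ) (iN : Fin N) (s : Finset (Fin N))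
    (hs : ∀ i ∈ s, i ≠ iN) (f : P) (hKf : ∀ i ∈ s, Kswap i iN f = f) :
    (∑ i ∈ s, (Dop β i)^[r] (Dop β iN f)) - Dop β iN (∑ i ∈ s, (Dop β i)^[r] f)
      = β • (s.card • (Dop β iN)^[r] f - ∑ i ∈ s, (Dop β i)^[r] f) := by
  rw [Dop_sum, ← Finset.sum_sub_distrib]
  rw [Finset.sum_congr rfl (fun i hi => by
    rw [Dop_pow_comm β (hs i hi) r f, hKf i hi])]
  rw [← Finset.smul_sum, Finset.sum_sub_distrib, Finset.sum_const]

end DunklProof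
/-- for every `r ≥ 0` and symmetric `f`,
`[∑_{i=1}^{N-1} D_i^r, D_N] f = β ((N-1) D_N^r - ∑_{i=1}^{N-1} D_i^r) f`.
(0-indexed: `D_N` is `Dop β ⟨N-1,_⟩` and the sum is over `x < N-1`.) -/
theorem statement_14 {F : Type*} [Field F] [CharZero F] {N : ℕ} (hN : 0 < N) (β : F)
    (r : ℕ) (f : MvPolynomial (Fin N) F) (hf : f.IsSymmetric) :
    (∑ i ∈ Finset.univ.filter (fun x : Fin N => (x : ℕ) < N - 1),
        (Dop β i)^[r] (Dop β (⟨N - 1, by omega⟩ : Fin N) f))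
      - Dop β (⟨N - 1, by omega⟩ : Fin N)
          (∑ i ∈ Finset.univ.filter (fun x : Fin N => (x : ℕ) < N - 1), (Dop β i)^[r] f)
    = β • (((N - 1 : ℕ) : F) • (Dop β (⟨N - 1, by omega⟩ : Fin N))^[r] f
        - ∑ i ∈ Finset.univ.filter (fun x : Fin N => (x : ℕ) < N - 1), (Dop β i)^[r] f) := by
  classical
  have hiN : ((⟨N - 1, by omega⟩ : Fin N) : ℕ) = N - 1 := rfl
  set s := Finset.univ.filter (fun x : Fin N => (x : ℕ) < N - 1) with hsdef
  have hs : ∀ i ∈ s, i ≠ (⟨N - 1, by omega⟩ : Fin N) := by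
    intro i hi e
    have h2 := (Finset.mem_filter.mp hi).2
    rw [e] at h2
    omega
  have hKf : ∀ i ∈ s, Kswap i (⟨N - 1, by omega⟩ : Fin N) f = f := fun i _ => hf _
  rw [final_helper β r _ s hs f hKf]
  have hcard : s.card = N - 1 := by
    have : s = Finset.univ.erase (⟨N - 1, by omega⟩ : Fin N) := by
      ext x
      simp only [hsdef, Finset.mem_filter, Finset.mem_univ, true_and, Finset.mem_erase,
        and_true]
      constructor
      · intro h e
        rw [e] at h
        omega
      · intro h
        have hx := x.isLt
        rcases lt_or_ge (x : ℕ) (N - 1) with h1 | h1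
        · exact h1
        · exfalso
          apply h
          apply Fin.ext
          omega
    rw [this, Finset.card_erase_of_mem (Finset.mem_univ _), Finset.card_univ,
      Fintype.card_fin]
  rw [hcard, ← Nat.cast_smul_eq_nsmul F (N - 1) ((Dop β (⟨N - 1, by omega⟩ : Fin N))^[r] f)]
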